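/- Let n ≥ 1, let k_B > 0, let (b_{αβ})_{α,β=1}^n be a symmetric matrix with all entries b_{αβ} > 0, let m_1,…,m_n and T_1,…,T_n be positive real numbers, and let u_1,…,u_n ∈ ℝ^3. Define Σ := ∑_{α,β=1}^n b_{αβ} [ −(u_α/T_α) · ((m_α + m_β)(u_β − u_α)) + (1/T_α)( 3 k_B (T_β − T_α) + (m_α u_α + m_β u_β) · (u_β − u_α) ) ]. Then Σ = ∑_{α,β=1}^n (b_{αβ}/(2 T_α T_β)) [ (m_α T_α + m_β T_β) ‖u_β − u_α‖² + 3 k_B (T_β − T_α)² ], so that Σ ≥ 0; moreover Σ = 0 if and only if u_α = u_β and T_α = T_β for all α, β ∈ {1,…,n}. -/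

import Mathlib

theorem stmt2 (n : ℕ) (hn : 1 ≤ n) (kB : ℝ) (hkB : 0 < kB)
    (b : Fin n → Fin n → ℝ) (hb_symm : ∀ α β, b α β = b β α) (hb_pos : ∀ α β, 0 < b α β)
    (m T : Fin n → ℝ) (hm : ∀ α, 0 < m α) (hT : ∀ α, 0 < T α)
    (u : Fin n → EuclideanSpace ℝ (Fin 3))
    (S : ℝ)
    (hS : S = ∑ α, ∑ β, b α β *
      (-(inner ℝ ((T α)⁻¹ • u α) ((m α + m β) • (u β - u α)) : ℝ) +
        (T α)⁻¹ * (3 * kB * (T β - T α) +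
          (inner ℝ (m α • u α + m β • u β) (u β - u α) : ℝ)))) :
    S = ∑ α, ∑ β, b α β / (2 * T α * T β) *
          ((m α * T α + m β * T β) * ‖u β - u α‖ ^ 2 + 3 * kB * (T β - T α) ^ 2) ∧
      0 ≤ S ∧
      (S = 0 ↔ ∀ α β, u α = u β ∧ T α = T β) := by
  set g : Fin n → Fin n → ℝ := fun α β => b α β / (2 * T α * T β) *
      ((m α * T α + m β * T β) * ‖u β - u α‖ ^ 2 + 3 * kB * (T β - T α) ^ 2) with hgdef
  set F : Fin n → Fin n → ℝ := fun α β =>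
      b α β * ((T α)⁻¹ * (3 * kB * (T β - T α) + m β * ‖u β - u α‖ ^ 2)) with hFdef
  -- Step 1: simplify the summand of S
  have hS' : S = ∑ α, ∑ β, F α β := by
    rw [hS]
    refine Finset.sum_congr rfl fun α _ => Finset.sum_congr rfl fun β _ => ?_
    have h1 : (inner ℝ (u β - u α) (u β - u α) : ℝ) = ‖u β - u α‖ ^ 2 :=
      real_inner_self_eq_norm_sq _
    rw [inner_sub_left] at h1
    simp only [hFdef, real_inner_smul_left, real_inner_smul_right, inner_add_left]
    linear_combination (b α β * (T α)⁻¹ * (m β)) * h1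
  -- Step 2: symmetrization identity
  have key : ∀ α β, F α β + F β α = 2 * g α β := by
    intro α β
    have hTα := (hT α).ne'
    have hTβ := (hT β).ne'
    simp only [hFdef, hgdef]
    rw [hb_symm β α, norm_sub_rev (u α) (u β)]
    field_simp
    ring
  have hnonneg : ∀ α β, 0 ≤ g α β := by
    intro α β
    have h1 := hb_pos α β
    have h2 := hT α
    have h3 := hT β
    have h4 := hm α
    have h5 := hm β
    positivity
  have hSg : S = ∑ α, ∑ β, g α β := by
    have hc : (∑ α, ∑ β, F α β) = ∑ α, ∑ β, F β α := Finset.sum_comm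
    have h2 : S + S = ∑ α, ∑ β, (F α β + F β α) := by
      simp only [Finset.sum_add_distrib]
      rw [← hc, ← hS']
    have h3 : (∑ α, ∑ β, (F α β + F β α)) = 2 * ∑ α, ∑ β, g α β := by
      rw [Finset.mul_sum]
      refine Finset.sum_congr rfl fun α _ => ?_
      rw [Finset.mul_sum]
      exact Finset.sum_congr rfl fun β _ => key α β
    linarith
  have hSnonneg : 0 ≤ S := by
    rw [hSg]
    exact Finset.sum_nonneg fun α _ => Finset.sum_nonneg fun β _ => hnonneg α β
  refine ⟨hSg, hSnonneg, ?_, ?_⟩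
  · -- S = 0 → all equal
    intro h0 α β
    have hle : g α β ≤ S := by
      rw [hSg]
      calc g α β ≤ ∑ β', g α β' :=
            Finset.single_le_sum (fun i _ => hnonneg α i) (Finset.mem_univ β)
        _ ≤ ∑ α', ∑ β', g α' β' :=
            Finset.single_le_sum
              (fun i _ => Finset.sum_nonneg fun j _ => hnonneg i j) (Finset.mem_univ α)
    have hg0 : g α β = 0 := le_antisymm (h0 ▸ hle) (hnonneg α β)
    have hbpos : 0 < b α β / (2 * T α * T β) := by
      have h1 := hb_pos α β; have h2 := hT α; have h3 := hT β; positivity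
    have hbr : (m α * T α + m β * T β) * ‖u β - u α‖ ^ 2 + 3 * kB * (T β - T α) ^ 2 = 0 := by
      rcases mul_eq_zero.mp hg0 with h' | h'
      · exact absurd h' hbpos.ne'
      · exact h'
    have hm1 : 0 < m α * T α + m β * T β := by
      have h2 := hT α; have h3 := hT β; have h4 := hm α; have h5 := hm β; positivity
    have e1 : 0 ≤ (m α * T α + m β * T β) * ‖u β - u α‖ ^ 2 := by positivity
    have e2 : 0 ≤ 3 * kB * (T β - T α) ^ 2 := by positivity
    have e1' : (m α * T α + m β * T β) * ‖u β - u α‖ ^ 2 = 0 := by linarith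
    have e2' : 3 * kB * (T β - T α) ^ 2 = 0 := by linarith
    have hu : ‖u β - u α‖ ^ 2 = 0 := by
      rcases mul_eq_zero.mp e1' with h' | h'
      · exact absurd h' hm1.ne'
      · exact h'
    have hT' : (T β - T α) ^ 2 = 0 := by
      rcases mul_eq_zero.mp e2' with h' | h'
      · nlinarith
      · exact h'
    constructor
    · have : u β - u α = 0 := by
        rwa [pow_eq_zero_iff (two_ne_zero), norm_eq_zero] at hu
      exact (sub_eq_zero.mp this).symm
    · have : T β - T α = 0 := by
        exact pow_eq_zero_iff (two_ne_zero) |>.mp hT'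
      linarith [sub_eq_zero.mp this]
  · -- all equal → S = 0
    intro h
    rw [hSg]
    refine Finset.sum_eq_zero fun α _ => Finset.sum_eq_zero fun β _ => ?_
    obtain ⟨h1, h2⟩ := h α β
    simp [hgdef, h1, h2]
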